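/- Let R be a commutative ring and S, T commutative R-algebras that are finitely presented as R-modules. Then there is a natural isomorphism of R[[z]]-algebras S[[z]] ⊗_{R[[z]]} T[[z]] ≅ (S ⊗_R T)[[z]]. -/

import Mathlib

open scoped TensorProduct

set_option synthInstance.maxHeartbeats 1000000
set_option maxHeartbeats 1000000

/-- `S[[z]]` is an `R[[z]]`-algebra via `PowerSeries.map` of the structure map. -/
noncomputable instance powerSeriesAlgebraOfAlgebra (R S : Type*) [CommRing R] [CommRing S]
    [Algebra R S] : Algebra (PowerSeries R) (PowerSeries S) :=
  (PowerSeries.map (algebraMap R S)).toAlgebra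

namespace PSTensorAux

open TensorProduct LinearMap

section KeyLemma

variable {R : Type*} [CommRing R] {ι : Type*} (P : ι → Type*)
  [∀ i, AddCommGroup (P i)] [∀ i, Module R (P i)]

/-- Swapping the arguments of a function type, linearly. -/
def swapPi (κ : Type*) : (κ → ∀ i, P i) ≃ₗ[R] ∀ i, κ → P i where
  toFun f := fun i k => f k i
  invFun f := fun k i => f i k
  map_add' _ _ := rfl
  map_smul' _ _ := rfl
  left_inv _ := rfl
  right_inv _ := rfl

lemma piRightHom_free_bijective (κ : Type*) [Fintype κ] [DecidableEq κ] :
    Function.Bijective (piRightHom R R (κ → R) P) := by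
  let e : ((κ → R) ⊗[R] (∀ i, P i)) ≃ₗ[R] ∀ i, (κ → R) ⊗[R] P i :=
    (TensorProduct.comm R _ _) ≪≫ₗ (piScalarRight R R (∀ i, P i) κ) ≪≫ₗ (swapPi P κ) ≪≫ₗ
      (LinearEquiv.piCongrRight fun i =>
        ((TensorProduct.comm R _ _) ≪≫ₗ piScalarRight R R (P i) κ).symm)
  have he : piRightHom R R (κ → R) P = e.toLinearMap := by
    apply TensorProduct.ext'
    intro v p
    funext i
    simp only [piRightHom_tmul, e, LinearEquiv.coe_coe, LinearEquiv.trans_apply,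
      TensorProduct.comm_tmul, piScalarRight_apply, piScalarRightHom_tmul,
      LinearEquiv.piCongrRight_apply, swapPi, LinearEquiv.coe_mk,
      Equiv.coe_fn_mk, LinearMap.coe_mk, AddHom.coe_mk]
    rw [eq_comm, LinearEquiv.symm_apply_eq]
    simp [Pi.smul_apply]
  rw [he]
  exact e.bijective


lemma piRightHom_naturality {M N : Type*} [AddCommGroup M] [Module R M]
    [AddCommGroup N] [Module R N] (l : M →ₗ[R] N) (x : M ⊗[R] (∀ i, P i)) :
    piRightHom R R N P (l.rTensor _ x) = fun i => (l.rTensor (P i)) (piRightHom R R M P x i) := by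
  induction x with
  | zero => funext i; simp
  | tmul m f => rfl
  | add x y hx hy =>
    simp only [map_add, hx, hy]
    funext i
    simp

theorem piRightHom_bijective (M : Type*) [AddCommGroup M] [Module R M]
    [Module.FinitePresentation R M] :
    Function.Bijective (piRightHom R R M P) := by
  classical
  obtain ⟨n, g, hg⟩ := Module.Finite.exists_fin' R M
  have hker : (LinearMap.ker g).FG := Module.FinitePresentation.fg_ker g hg
  obtain ⟨m, v, hv⟩ := Submodule.fg_iff_exists_fin_generating_family.mp hker
  set f : (Fin m → R) →ₗ[R] (Fin n → R) := Fintype.linearCombination R v with hf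
  have hrange : LinearMap.range f = LinearMap.ker g := by
    rw [hf, Fintype.range_linearCombination, hv]
  have hexact : Function.Exact f g := LinearMap.exact_iff.mpr hrange.symm
  have hcomp : g.comp f = 0 := hexact.linearMap_comp_eq_zero
  have hfree_n := piRightHom_free_bijective (R := R) P (Fin n)
  have hfree_m := piRightHom_free_bijective (R := R) P (Fin m)
  constructor
  · rw [injective_iff_map_eq_zero (piRightHom R R M P)]
    intro t ht
    obtain ⟨x, rfl⟩ := LinearMap.rTensor_surjective (∀ i, P i) hg t
    have h1 : ∀ i, (g.rTensor (P i)) (piRightHom R R (Fin n → R) P x i) = 0 := by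
      intro i
      have h0 := congrFun ((piRightHom_naturality P g x).symm.trans ht) i
      simpa using h0
    have h2 : ∀ i, ∃ w, (f.rTensor (P i)) w = piRightHom R R (Fin n → R) P x i := by
      intro i
      exact ((rTensor_exact (P i) hexact hg) _).mp (h1 i)
    choose w hw using h2
    obtain ⟨u, hu⟩ := hfree_m.2 w
    have hx : (f.rTensor (∀ i, P i)) u = x := by
      apply hfree_n.1
      rw [piRightHom_naturality]
      funext i
      rw [congrFun hu i, hw i]
    rw [← hx, ← LinearMap.rTensor_comp_apply, hcomp, LinearMap.rTensor_zero, LinearMap.zero_apply]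
  · intro y
    have h1 : ∀ i, ∃ z, (g.rTensor (P i)) z = y i :=
      fun i => LinearMap.rTensor_surjective (P i) hg (y i)
    choose z hz using h1
    obtain ⟨x, hx⟩ := hfree_n.2 z
    refine ⟨g.rTensor _ x, ?_⟩
    rw [piRightHom_naturality]
    funext i
    rw [congrFun hx i, hz i]

end KeyLemma


section Main

variable (R S T : Type*) [CommRing R] [CommRing S] [CommRing T] [Algebra R S] [Algebra R T]

lemma psAlgebraMap_eq :
    algebraMap (PowerSeries R) (PowerSeries S) = PowerSeries.map (algebraMap R S) := rfl

lemma psSmul_eq (h : PowerSeries R) (x : PowerSeries S) :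
    h • x = PowerSeries.map (algebraMap R S) h * x := rfl

lemma psMap_smul (r : R) (h : PowerSeries R) :
    PowerSeries.map (algebraMap R S) (r • h) = r • PowerSeries.map (algebraMap R S) h := by
  ext n
  simp [PowerSeries.coeff_map, PowerSeries.coeff_smul, Algebra.smul_def,
    PowerSeries.algebraMap_apply, PowerSeries.map_C, PowerSeries.coeff_C_mul]

instance psTower : IsScalarTower R (PowerSeries R) (PowerSeries S) := by
  constructor
  intro r h x
  show PowerSeries.map (algebraMap R S) (r • h) * x
      = r • (PowerSeries.map (algebraMap R S) h * x)
  rw [psMap_smul, smul_mul_assoc]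

noncomputable def psKS : (PowerSeries R) ⊗[R] S →ₗ[PowerSeries R] PowerSeries S :=
  ((Algebra.linearMap S (PowerSeries S)).restrictScalars R).liftBaseChange (PowerSeries R)

lemma psKS_tmul (h : PowerSeries R) (s : S) :
    psKS R S (h ⊗ₜ s) = h • (PowerSeries.C s) := by
  simp [psKS, LinearMap.liftBaseChange_tmul, PowerSeries.algebraMap_apply]


noncomputable def psPiHom : S ⊗[R] PowerSeries T →ₗ[R] PowerSeries (S ⊗[R] T) :=
  TensorProduct.piRightHom R R S (fun _ : (Unit →₀ ℕ) => T)

lemma psPiHom_tmul_coeff (s : S) (g : PowerSeries T) (n : ℕ) :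
    PowerSeries.coeff n (psPiHom R S T (s ⊗ₜ g)) = s ⊗ₜ[R] (PowerSeries.coeff n g) := rfl

lemma psPiHom_bijective [Module.FinitePresentation R S] :
    Function.Bijective (psPiHom R S T) :=
  piRightHom_bijective (R := R) (fun _ : (Unit →₀ ℕ) => T) S

lemma psKS_surjective [Module.FinitePresentation R S] :
    Function.Surjective (psKS R S) := by
  have hbij := piRightHom_bijective (R := R) (fun _ : (Unit →₀ ℕ) => R) S
  let c : (∀ _ : (Unit →₀ ℕ), S ⊗[R] R) ≃ₗ[R] ((Unit →₀ ℕ) → S) :=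
    LinearEquiv.piCongrRight (fun _ => TensorProduct.rid R S)
  have key : ∀ x : S ⊗[R] ((Unit →₀ ℕ) → R),
      psKS R S ((TensorProduct.comm R S (PowerSeries R)) x)
        = c (TensorProduct.piRightHom R R S (fun _ : (Unit →₀ ℕ) => R) x) := by
    intro x
    induction x with
    | zero => simp; exact (congrArg (psKS R S) (map_zero (TensorProduct.comm R S (PowerSeries R)))).trans (map_zero _)
    | tmul s h =>
      show psKS R S (h ⊗ₜ[R] s) = _
      refine (psKS_tmul R S h s).trans ?_
      ext n
      refine (congrArg (PowerSeries.coeff n) (psSmul_eq R S h (PowerSeries.C s))).trans ?_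
      rw [PowerSeries.coeff_mul_C]
      show PowerSeries.coeff n (PowerSeries.map (algebraMap R S) h) * s
          = TensorProduct.rid R S (s ⊗ₜ[R] (PowerSeries.coeff n h))
      erw [PowerSeries.coeff_map]
      rw [TensorProduct.rid_tmul, Algebra.smul_def]
    | add a b ha hb =>
      rw [map_add (TensorProduct.piRightHom R R S (fun _ : (Unit →₀ ℕ) => R)) a b, map_add c, ← ha, ← hb]
      exact (congrArg (psKS R S) (map_add (TensorProduct.comm R S (PowerSeries R)) a b)).trans (map_add _ _ _)
  intro F
  obtain ⟨x, hx⟩ := hbij.2 (c.symm F)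
  refine ⟨(TensorProduct.comm R S (PowerSeries R)) x, ?_⟩
  rw [key x, hx]; exact c.apply_symm_apply F


lemma psC_smul (r : R) (s : S) :
    PowerSeries.C (r • s) = r • PowerSeries.C s := by
  ext n
  simp [PowerSeries.coeff_smul, PowerSeries.coeff_C, apply_ite (r • ·)]

noncomputable def psQBil :
    S →ₗ[R] PowerSeries T →ₗ[R] (PowerSeries S ⊗[PowerSeries R] PowerSeries T) where
  toFun s :=
    { toFun := fun g => (PowerSeries.C s) ⊗ₜ[PowerSeries R] g
      map_add' := fun g g' => TensorProduct.tmul_add _ g g'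
      map_smul' := fun r g => by
        show (PowerSeries.C s) ⊗ₜ[PowerSeries R] (r • g)
            = r • ((PowerSeries.C s) ⊗ₜ[PowerSeries R] g)
        rw [TensorProduct.smul_tmul', ← TensorProduct.smul_tmul] }
  map_add' s s' := by
    ext g
    show (PowerSeries.C (s + s')) ⊗ₜ[PowerSeries R] g = _
    rw [map_add, TensorProduct.add_tmul]
    rfl
  map_smul' r s := by
    ext g
    show (PowerSeries.C (r • s)) ⊗ₜ[PowerSeries R] g = _
    rw [psC_smul, ← TensorProduct.smul_tmul']
    rfl

noncomputable def psQ :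
    S ⊗[R] PowerSeries T →ₗ[R] (PowerSeries S ⊗[PowerSeries R] PowerSeries T) :=
  TensorProduct.lift (psQBil R S T)

lemma psQ_tmul (s : S) (g : PowerSeries T) :
    psQ R S T (s ⊗ₜ g) = (PowerSeries.C s) ⊗ₜ[PowerSeries R] g := rfl

lemma psQ_surjective [Module.FinitePresentation R S] :
    Function.Surjective (psQ R S T) := by
  have key : ∀ (xf : PowerSeries R ⊗[R] S) (g : PowerSeries T),
      ∃ y, psQ R S T y = (psKS R S xf) ⊗ₜ[PowerSeries R] g := by
    intro xf
    induction xf with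
    | zero => exact fun g => ⟨0, by simp⟩
    | add a b ha hb =>
      intro g
      obtain ⟨y, hy⟩ := ha g
      obtain ⟨z, hz⟩ := hb g
      exact ⟨y + z, by rw [map_add, hy, hz, map_add, TensorProduct.add_tmul]⟩
    | tmul h s =>
      intro g
      refine ⟨s ⊗ₜ[R] (h • g), ?_⟩
      rw [psQ_tmul, psKS_tmul, TensorProduct.smul_tmul]
  intro x
  induction x with
  | zero => exact ⟨0, map_zero _⟩
  | add a b ha hb =>
    obtain ⟨y, rfl⟩ := ha
    obtain ⟨z, rfl⟩ := hb
    exact ⟨y + z, map_add _ _ _⟩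
  | tmul f g =>
    obtain ⟨xf, rfl⟩ := psKS_surjective R S f
    exact key xf g

noncomputable def psPhi1 : PowerSeries S →ₐ[PowerSeries R] PowerSeries (S ⊗[R] T) :=
  { PowerSeries.map (Algebra.TensorProduct.includeLeftRingHom (R := R) (A := S) (B := T)) with
    commutes' := fun c => by
      show PowerSeries.map _ (PowerSeries.map (algebraMap R S) c)
          = PowerSeries.map (algebraMap R (S ⊗[R] T)) c
      have h1 : (Algebra.TensorProduct.includeLeftRingHom (R := R) (A := S) (B := T)).comp
          (algebraMap R S) = algebraMap R (S ⊗[R] T) := by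
        ext r
        simp [Algebra.TensorProduct.includeLeftRingHom_apply,
          Algebra.TensorProduct.algebraMap_apply]
      rw [← RingHom.comp_apply, ← PowerSeries.map_comp, h1] }

noncomputable def psPhi2 : PowerSeries T →ₐ[PowerSeries R] PowerSeries (S ⊗[R] T) :=
  { PowerSeries.map
      ((Algebra.TensorProduct.includeRight (R := R) (A := S) (B := T)).toRingHom) with
    commutes' := fun c => by
      show PowerSeries.map _ (PowerSeries.map (algebraMap R T) c)
          = PowerSeries.map (algebraMap R (S ⊗[R] T)) c
      have h0 : (Algebra.TensorProduct.includeRight (R := R) (A := S) (B := T)).toRingHom.comp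
          (algebraMap R T) = algebraMap R (S ⊗[R] T) := by
        rw [← Algebra.TensorProduct.includeLeftRingHom_comp_algebraMap]
        ext r
        simp [Algebra.TensorProduct.includeLeftRingHom_apply,
          Algebra.TensorProduct.algebraMap_apply]
      rw [← RingHom.comp_apply, ← PowerSeries.map_comp, h0] }

noncomputable def psPhi :
    (PowerSeries S ⊗[PowerSeries R] PowerSeries T) →ₐ[PowerSeries R] PowerSeries (S ⊗[R] T) :=
  Algebra.TensorProduct.productMap (psPhi1 R S T) (psPhi2 R S T)

lemma psPhi_q (y : S ⊗[R] PowerSeries T) :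
    psPhi R S T (psQ R S T y) = psPiHom R S T y := by
  induction y with
  | zero => simp
  | add a b ha hb => simp only [map_add, ha, hb]
  | tmul s g =>
    rw [psQ_tmul]
    ext n
    rw [psPiHom_tmul_coeff]
    show PowerSeries.coeff n
        (PowerSeries.map (Algebra.TensorProduct.includeLeftRingHom (R := R) (A := S) (B := T))
            (PowerSeries.C s) *
          PowerSeries.map
            ((Algebra.TensorProduct.includeRight (R := R) (A := S) (B := T)).toRingHom) g)
        = s ⊗ₜ[R] (PowerSeries.coeff n) g
    rw [PowerSeries.map_C, PowerSeries.coeff_C_mul, PowerSeries.coeff_map]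
    show (s ⊗ₜ[R] (1 : T)) * ((1 : S) ⊗ₜ[R] (PowerSeries.coeff n g)) = _
    rw [Algebra.TensorProduct.tmul_mul_tmul, one_mul, mul_one]

end Main

end PSTensorAux

/-- For commutative `R`-algebras `S, T` that are finitely presented as `R`-modules, the
natural map gives an isomorphism of `R[[z]]`-algebras
`S[[z]] ⊗_{R[[z]]} T[[z]] ≅ (S ⊗_R T)[[z]]`. -/
theorem powerSeries_tensor_powerSeries (R S T : Type*) [CommRing R] [CommRing S]
    [CommRing T] [Algebra R S] [Algebra R T]
    [Module.FinitePresentation R S] [Module.FinitePresentation R T] :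
    ∃ e : (PowerSeries S ⊗[PowerSeries R] PowerSeries T) ≃+* PowerSeries (S ⊗[R] T),
      (∀ (f : PowerSeries S) (g : PowerSeries T),
        e (f ⊗ₜ[PowerSeries R] g) =
          PowerSeries.map (Algebra.TensorProduct.includeLeftRingHom (R := R) (A := S) (B := T)) f *
            PowerSeries.map
              (Algebra.TensorProduct.includeRight (R := R) (A := S) (B := T)).toRingHom g) ∧
      ∀ c : PowerSeries R,
        e (algebraMap (PowerSeries R) (PowerSeries S ⊗[PowerSeries R] PowerSeries T) c) =
          PowerSeries.map (algebraMap R (S ⊗[R] T)) c := by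
  classical
  have hbij : Function.Bijective (PSTensorAux.psPhi R S T) := by
    constructor
    · refine (injective_iff_map_eq_zero (PSTensorAux.psPhi R S T)).mpr ?_
      intro x hx
      obtain ⟨y, rfl⟩ := PSTensorAux.psQ_surjective R S T x
      have h1 : PSTensorAux.psPiHom R S T y = 0 := by
        rw [← PSTensorAux.psPhi_q]; exact hx
      have hy : y = 0 := (PSTensorAux.psPiHom_bijective R S T).1 (by rw [h1, map_zero])
      rw [hy, map_zero]
    · intro F
      obtain ⟨y, hy⟩ := (PSTensorAux.psPiHom_bijective R S T).2 F
      exact ⟨PSTensorAux.psQ R S T y, by rw [PSTensorAux.psPhi_q, hy]⟩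
  refine ⟨RingEquiv.ofBijective (PSTensorAux.psPhi R S T) hbij, ?_, ?_⟩
  · intro f g
    rfl
  · intro c
    exact (PSTensorAux.psPhi R S T).commutes c
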